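/- Assuming Mertens' third theorem, i.e. lim_{n→∞} (log p_n) · ∏_{i=1}^{n} (1 - 1/p_i) = e^{-γ}, one has lim_{n→∞} (log p_n)^2 · ∏_{i=2}^{n} (1 - 2/p_i) = 4 · C_2 · e^{-2γ}, where C_2 = ∏_{i=2}^{∞} (1 - 1/(p_i - 1)^2). -/

import Mathlib

open Filter

/-- `p i` is the `i`-th prime number, so that `p 1 = 2`, `p 2 = 3`, ... -/
noncomputable def p (i : ℕ) : ℕ := Nat.nth Nat.Prime (i - 1)

theorem stmt_5 (C2 : ℝ)
    (hMertens : Tendsto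
      (fun n : ℕ => Real.log (p n) * ∏ i ∈ Finset.Icc 1 n, (1 - 1 / (p i : ℝ)))
      atTop (nhds (Real.exp (-Real.eulerMascheroniConstant))))
    (hC2 : Tendsto
      (fun n : ℕ => ∏ i ∈ Finset.Icc 2 n, (1 - 1 / ((p i : ℝ) - 1) ^ 2))
      atTop (nhds C2)) :
    Tendsto (fun n : ℕ => (Real.log (p n)) ^ 2 * ∏ i ∈ Finset.Icc 2 n, (1 - 2 / (p i : ℝ)))
      atTop (nhds (4 * C2 * Real.exp (-2 * Real.eulerMascheroniConstant))) := by
  have hp : ∀ i, (p i).Prime := fun i =>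
    Nat.nth_mem_of_infinite Nat.infinite_setOf_prime _
  have hp1 : p 1 = 2 := by
    have h := Nat.nth_count (p := Nat.Prime) (by norm_num : Nat.Prime 2)
    have hc : Nat.count Nat.Prime 2 = 0 := by decide
    simpa [p, hc] using h
  -- the combined limit
  have hT : Tendsto
      (fun n : ℕ => (∏ i ∈ Finset.Icc 2 n, (1 - 1 / ((p i : ℝ) - 1) ^ 2)) *
        (2 * (Real.log (p n) * ∏ i ∈ Finset.Icc 1 n, (1 - 1 / (p i : ℝ)))) ^ 2)
      atTop (nhds (C2 * (2 * Real.exp (-Real.eulerMascheroniConstant)) ^ 2)) :=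
    hC2.mul ((hMertens.const_mul 2).pow 2)
  have hval : C2 * (2 * Real.exp (-Real.eulerMascheroniConstant)) ^ 2 =
      4 * C2 * Real.exp (-2 * Real.eulerMascheroniConstant) := by
    rw [mul_pow, sq (Real.exp _), ← Real.exp_add]
    ring_nf
  rw [← hval]
  apply hT.congr'
  filter_upwards [eventually_ge_atTop 1] with n hn
  -- pointwise identity for n ≥ 1
  have hsplit : Finset.Icc 1 n = insert 1 (Finset.Icc 2 n) := by
    ext x; simp [Finset.mem_Icc, Finset.mem_insert]; omega
  have h1 : ∏ i ∈ Finset.Icc 1 n, (1 - 1 / (p i : ℝ)) =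
      (1 - 1 / (2 : ℝ)) * ∏ i ∈ Finset.Icc 2 n, (1 - 1 / (p i : ℝ)) := by
    rw [hsplit, Finset.prod_insert (by simp), hp1]
    norm_num
  have hterm : ∀ i ∈ Finset.Icc 2 n, (1 - 2 / (p i : ℝ)) =
      (1 - 1 / ((p i : ℝ) - 1) ^ 2) * (1 - 1 / (p i : ℝ)) ^ 2 := by
    intro i _
    have h2 : (2 : ℝ) ≤ (p i : ℝ) := by exact_mod_cast (hp i).two_le
    have h0 : (p i : ℝ) ≠ 0 := by linarith
    have h1' : (p i : ℝ) - 1 ≠ 0 := by intro h; nlinarith [h]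
    field_simp
    ring
  rw [Finset.prod_congr rfl hterm, Finset.prod_mul_distrib, Finset.prod_pow, h1]
  ring
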